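/- Let (V,d) be a finite metric space with n ≥ 2 points and distinct pairwise distances. Let L_NUV be the length of the NUV walk from v_0, and let L_TSP be the minimal length over all enumerations of V starting at v_0 of the sum of consecutive distances. Then L_NUV ≤ 2·L_TSP·(1 + log n). -/

import Mathlib

/-- The length `D(v_i)` of the step taken from the `i`-th visited point. -/
noncomputable def stepLen {V : Type*} [MetricSpace V] {n : ℕ} (e : Fin n → V) (i : Fin n) : ℝ :=
  if h : i.val + 1 < n then dist (e i) (e ⟨i.val + 1, h⟩) else 0

/-- Total length of the walk `e`. -/
noncomputable def walkLen {V : Type*} [MetricSpace V] {n : ℕ} (e : Fin n → V) : ℝ :=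
  ∑ i : Fin n, stepLen e i

/-- `e` is a nearest-unvisited-vertex (greedy) order. -/
def IsNUV {V : Type*} [MetricSpace V] {n : ℕ} (e : Fin n → V) : Prop :=
  ∀ i j : Fin n, i < j → stepLen e i ≤ dist (e i) (e j)

/-- All pairwise distances between distinct points are distinct. -/
def DistinctDistances (V : Type*) [MetricSpace V] : Prop :=
  ∀ a b c d : V, a ≠ b → c ≠ d → dist a b = dist c d → (a = c ∧ b = d) ∨ (a = d ∧ b = c)

lemma dist_le_sum_Ico {V : Type*} [MetricSpace V] (f : ℕ → V) {a b : ℕ} (hab : a ≤ b) :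
    dist (f a) (f b) ≤ ∑ i ∈ Finset.Ico a b, dist (f i) (f (i+1)) := by
  obtain ⟨k, rfl⟩ := Nat.exists_eq_add_of_le hab
  rw [Finset.sum_Ico_eq_sum_range]
  simp only [Nat.add_sub_cancel_left]
  have := dist_le_range_sum_dist (fun j => f (a + j)) k
  simpa [Nat.add_assoc] using this

lemma sep_sum {V : Type*} [MetricSpace V] (f : ℕ → V) (ℓ : ℝ) :
    ∀ (Q : Finset ℕ) (hQ : Q.Nonempty),
      (∀ p ∈ Q, ∀ q ∈ Q, p ≠ q → ℓ ≤ dist (f p) (f q)) →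
      ((Q.card : ℝ) - 1) * ℓ ≤ ∑ i ∈ Finset.Ico (Q.min' hQ) (Q.max' hQ), dist (f i) (f (i+1)) := by
  intro Q
  induction Q using Finset.strongInduction with
  | _ Q ih =>
    intro hQ hsep
    rcases eq_or_lt_of_le (Finset.one_le_card.mpr hQ) with h1 | h2
    · have : ((Q.card : ℝ) - 1) = 0 := by rw [← h1]; norm_num
      rw [this, zero_mul]
      exact Finset.sum_nonneg fun i _ => dist_nonneg
    · set b := Q.max' hQ with hb
      have hbQ : b ∈ Q := Q.max'_mem hQ
      set Q' := Q.erase b with hQ'def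
      have hQ'sub : Q' ⊂ Q := Finset.erase_ssubset hbQ
      have hcard' : Q'.card = Q.card - 1 := Finset.card_erase_of_mem hbQ
      have hQ' : Q'.Nonempty := Finset.card_pos.mp (by omega)
      set b' := Q'.max' hQ' with hb'
      have hb'Q' : b' ∈ Q' := Q'.max'_mem hQ'
      have hb'Q : b' ∈ Q := Finset.mem_of_mem_erase hb'Q'
      have hb'ne : b' ≠ b := Finset.ne_of_mem_erase hb'Q'
      have hb'lt : b' < b := lt_of_le_of_ne (Q.le_max' b' hb'Q) hb'ne
      have hminQ' : Q.min' hQ ∈ Q' := by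
        refine Finset.mem_erase.mpr ⟨?_, Q.min'_mem hQ⟩
        have := Q.min'_le b' hb'Q
        omega
      have hmin : Q'.min' hQ' = Q.min' hQ := by
        apply le_antisymm (Finset.min'_le _ _ hminQ')
        exact Q.min'_le _ (Finset.mem_of_mem_erase (Q'.min'_mem hQ'))
      have hm_le : Q.min' hQ ≤ b' := Q.min'_le b' hb'Q
      have hsplit : (∑ i ∈ Finset.Ico (Q.min' hQ) b', dist (f i) (f (i+1)))
          + (∑ i ∈ Finset.Ico b' b, dist (f i) (f (i+1)))
          = ∑ i ∈ Finset.Ico (Q.min' hQ) b, dist (f i) (f (i+1)) :=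
        Finset.sum_Ico_consecutive _ hm_le (le_of_lt hb'lt)
      have hIH : ((Q'.card : ℝ) - 1) * ℓ ≤
          ∑ i ∈ Finset.Ico (Q.min' hQ) b', dist (f i) (f (i+1)) := by
        have := ih Q' hQ'sub hQ' (fun p hp q hq hpq =>
          hsep p (Finset.mem_of_mem_erase hp) q (Finset.mem_of_mem_erase hq) hpq)
        rwa [hmin] at this
      have hlast : ℓ ≤ ∑ i ∈ Finset.Ico b' b, dist (f i) (f (i+1)) :=
        le_trans (hsep b' hb'Q b hbQ hb'ne) (dist_le_sum_Ico f (le_of_lt hb'lt))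
      have hcast : ((Q.card : ℝ) - 1) = ((Q'.card : ℝ) - 1) + 1 := by
        rw [hcard']
        have : 2 ≤ Q.card := h2
        push_cast [Nat.cast_sub (by omega : 1 ≤ Q.card)]
        ring
      calc ((Q.card : ℝ) - 1) * ℓ = ((Q'.card : ℝ) - 1) * ℓ + ℓ := by rw [hcast]; ring
        _ ≤ _ + _ := add_le_add hIH hlast
        _ = _ := hsplit

lemma harm_le : ∀ n : ℕ, 1 ≤ n → ∑ k ∈ Finset.Icc 1 n, (1:ℝ)/k ≤ 1 + Real.log n := by
  intro n
  induction n with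
  | zero => omega
  | succ m ih =>
    intro _
    rcases Nat.eq_zero_or_pos m with hm | hm
    · subst hm; simp
    · rw [Finset.sum_Icc_succ_top (by omega : 1 ≤ m + 1)]
      have hstep : (1:ℝ)/(m+1) ≤ Real.log (m+1) - Real.log m := by
        have hx : (0:ℝ) < (m:ℝ)/(m+1) := by positivity
        have := Real.log_le_sub_one_of_pos hx
        rw [Real.log_div (by positivity) (by positivity)] at this
        have hm1 : (0:ℝ) < (m:ℝ)+1 := by positivity
        rw [div_sub_one (ne_of_gt hm1)] at this
        have : Real.log m - Real.log ((m:ℝ)+1) ≤ -(1/((m:ℝ)+1)) := by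
          convert this using 1
          field_simp
          ring
        linarith
      have := ih hm
      push_cast
      push_cast at hstep
      linarith

noncomputable def extWalk {V : Type*} [MetricSpace V] {n : ℕ} (hn : 1 ≤ n) (t : Fin n → V)
    (i : ℕ) : V := t ⟨min i (n-1), by omega⟩

lemma extWalk_val {V : Type*} [MetricSpace V] {n : ℕ} (hn : 1 ≤ n) (t : Fin n → V) (i : Fin n) :
    extWalk hn t i.val = t i := by
  have := i.isLt
  rw [extWalk]
  congr 1
  exact Fin.ext (by simp only; omega)

lemma walkLen_eq {V : Type*} [MetricSpace V] {n : ℕ} (hn : 1 ≤ n) (t : Fin n → V) :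
    walkLen t = ∑ i ∈ Finset.range n,
      dist (extWalk hn t i) (extWalk hn t (i+1)) := by
  simp only [extWalk]
  rw [walkLen, ← Fin.sum_univ_eq_sum_range
    (fun i => dist (t ⟨min i (n-1), by omega⟩) (t ⟨min (i+1) (n-1), by omega⟩)) n]
  refine Finset.sum_congr rfl fun i _ => ?_
  have hi := i.isLt
  by_cases h : i.val + 1 < n
  · rw [stepLen, dif_pos h]
    have e1 : (⟨min i.val (n-1), by omega⟩ : Fin n) = i := Fin.ext (by simp only; omega)
    have e2 : (⟨min (i.val+1) (n-1), by omega⟩ : Fin n) = ⟨i.val+1, h⟩ :=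
      Fin.ext (by simp only; omega)
    rw [e1, e2]
  · rw [stepLen, dif_neg h]
    have e3 : (⟨min i.val (n-1), by omega⟩ : Fin n) = ⟨min (i.val+1) (n-1), by omega⟩ :=
      Fin.ext (by simp only; omega)
    rw [e3, dist_self]

/-- Corollary 1 (with explicit constant): for every Hamiltonian path `t` from the same
starting point — in particular for the shortest one, of length `L_TSP` — the NUV walk
satisfies `L_NUV ≤ 2·L_TSP·(1 + log n)`. -/
theorem stmt4 {V : Type*} [MetricSpace V] [Fintype V] {n : ℕ} (hn : 2 ≤ n)
    (hcard : Fintype.card V = n)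
    (hd : DistinctDistances V) (e : Fin n ≃ V) (hNUV : IsNUV (⇑e))
    (t : Fin n ≃ V) (ht0 : t ⟨0, by omega⟩ = e ⟨0, by omega⟩) :
    walkLen (⇑e) ≤ 2 * walkLen (⇑t) * (1 + Real.log n) := by
  classical
  have hn1 : 1 ≤ n := by omega
  set L := walkLen (⇑t) with hLdef
  set F : ℕ → V := extWalk hn1 ⇑t with hF
  have hLsum : L = ∑ i ∈ Finset.range n, dist (F i) (F (i+1)) := walkLen_eq hn1 ⇑t
  have hFval : ∀ i : Fin n, F i.val = t i := extWalk_val hn1 ⇑t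
  have hL0 : 0 ≤ L := by
    rw [hLsum]; exact Finset.sum_nonneg fun _ _ => dist_nonneg
  have hIcoL : ∀ a b : ℕ, b ≤ n → (∑ i ∈ Finset.Ico a b, dist (F i) (F (i+1))) ≤ L := by
    intro a b hb
    rw [hLsum]
    apply Finset.sum_le_sum_of_subset_of_nonneg
    · intro x hx
      simp only [Finset.mem_Ico, Finset.mem_range] at *
      omega
    · intros; exact dist_nonneg
  have hdistL : ∀ a b : V, dist a b ≤ L := by
    intro a b
    have ha : F (t.symm a).val = a := by rw [hFval]; simp
    have hb : F (t.symm b).val = b := by rw [hFval]; simp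
    rcases le_total (t.symm a).val (t.symm b).val with h | h
    · calc dist a b = dist (F (t.symm a).val) (F (t.symm b).val) := by rw [ha, hb]
        _ ≤ _ := dist_le_sum_Ico F h
        _ ≤ L := hIcoL _ _ (le_of_lt (t.symm b).isLt)
    · calc dist a b = dist (F (t.symm b).val) (F (t.symm a).val) := by rw [ha, hb, dist_comm]
        _ ≤ _ := dist_le_sum_Ico F h
        _ ≤ L := hIcoL _ _ (le_of_lt (t.symm a).isLt)
  set d : Fin n → ℝ := stepLen ⇑e with hddef
  set S : Finset (Fin n) := Finset.univ.filter (fun i => i.val + 1 < n) with hSdef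
  have hwalkE : walkLen ⇑e = ∑ i ∈ S, d i := by
    rw [walkLen]
    refine (Finset.sum_subset (Finset.subset_univ S) ?_).symm
    intro i _ hi
    rw [hSdef] at hi
    simp only [Finset.mem_filter, Finset.mem_univ, true_and] at hi
    rw [stepLen, dif_neg hi]
  set K : Fin n → ℕ := fun i => (S.filter (fun j => d i ≤ d j)).card with hK
  have hK1 : ∀ i ∈ S, 1 ≤ K i := fun i hi =>
    Finset.card_pos.mpr ⟨i, Finset.mem_filter.mpr ⟨hi, le_refl _⟩⟩
  have hKn : ∀ i, K i ≤ n := by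
    intro i
    calc K i ≤ S.card := Finset.card_le_card (Finset.filter_subset _ _)
      _ ≤ Fintype.card (Fin n) := Finset.card_le_univ S
      _ = n := Fintype.card_fin n
  have hdval : ∀ i : Fin n, ∀ h : i.val + 1 < n, d i = dist (e i) (e ⟨i.val+1, h⟩) := by
    intro i h
    rw [hddef, stepLen, dif_pos h]
  have hdist_ne : ∀ i ∈ S, ∀ j ∈ S, i ≠ j → d i ≠ d j := by
    intro i hi j hj hij heq
    rw [hSdef] at hi hj
    simp only [Finset.mem_filter, Finset.mem_univ, true_and] at hi hj
    have hdi := hdval i hi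
    have hdj := hdval j hj
    have hne1 : e i ≠ e ⟨i.val+1, hi⟩ := by
      intro h
      have := congrArg Fin.val (e.injective h)
      simp only at this
      omega
    have hne2 : e j ≠ e ⟨j.val+1, hj⟩ := by
      intro h
      have := congrArg Fin.val (e.injective h)
      simp only at this
      omega
    rw [hdi, hdj] at heq
    rcases hd _ _ _ _ hne1 hne2 heq with ⟨h1, h2⟩ | ⟨h1, h2⟩
    · exact hij (e.injective h1)
    · have v1 := congrArg Fin.val (e.injective h1)
      have v2 := congrArg Fin.val (e.injective h2)
      simp only at v1 v2
      omega
  have hKlt : ∀ a b : Fin n, a ∈ S → d a < d b → K b < K a := by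
    intro a b ha hab
    apply Finset.card_lt_card
    constructor
    · intro x hx
      simp only [Finset.mem_filter] at hx ⊢
      exact ⟨hx.1, le_trans (le_of_lt hab) hx.2⟩
    · intro hsub
      have hmem : a ∈ S.filter (fun j => d b ≤ d j) :=
        hsub (Finset.mem_filter.mpr ⟨ha, le_refl _⟩)
      have := (Finset.mem_filter.mp hmem).2
      linarith
  have hKinj : ∀ i ∈ S, ∀ j ∈ S, K i = K j → i = j := by
    intro i hi j hj hij
    by_contra hne
    rcases lt_or_gt_of_ne (hdist_ne i hi j hj hne) with h | h
    · have := hKlt i j hi h; omega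
    · have := hKlt j i hj h; omega
  have hKd : ∀ i ∈ S, (K i : ℝ) * d i ≤ 2 * L := by
    intro i hi
    have hi2 : i.val + 1 < n := by
      have := hi; rw [hSdef] at this
      simpa using this
    have hdiL : d i ≤ L := by
      rw [hdval i hi2]; exact hdistL _ _
    set T := S.filter (fun j => d i ≤ d j) with hT
    set Q : Finset ℕ := T.image (fun j => (t.symm (e j)).val) with hQdef
    have hinj : Set.InjOn (fun j : Fin n => (t.symm (e j)).val) T := by
      intro x _ y _ hxy
      exact e.injective (t.symm.injective (Fin.ext hxy))
    have hQcard : Q.card = K i := by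
      rw [hQdef, Finset.card_image_of_injOn hinj]
    have hiT : i ∈ T := Finset.mem_filter.mpr ⟨hi, le_refl _⟩
    have hQne : Q.Nonempty := ⟨_, Finset.mem_image_of_mem _ hiT⟩
    have hFe : ∀ j : Fin n, F (t.symm (e j)).val = e j := by
      intro j; rw [hFval]; simp
    have hTd : ∀ j ∈ T, d i ≤ d j := fun j hj => (Finset.mem_filter.mp hj).2
    have hQsep : ∀ p ∈ Q, ∀ q ∈ Q, p ≠ q → d i ≤ dist (F p) (F q) := by
      intro p hp q hq hpq
      obtain ⟨j1, hj1, rfl⟩ := Finset.mem_image.mp hp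
      obtain ⟨j2, hj2, rfl⟩ := Finset.mem_image.mp hq
      rw [hFe j1, hFe j2]
      have hj12 : j1 ≠ j2 := fun h => hpq (by rw [h])
      rcases lt_or_gt_of_ne hj12 with h | h
      · exact le_trans (hTd j1 hj1) (hNUV j1 j2 h)
      · rw [dist_comm]
        exact le_trans (hTd j2 hj2) (hNUV j2 j1 h)
    have hsep' := sep_sum F (d i) Q hQne hQsep
    have hmax : Q.max' hQne < n := by
      have hm := Q.max'_mem hQne
      obtain ⟨j, _, hj⟩ := Finset.mem_image.mp hm
      rw [← hj]
      exact (t.symm (e j)).isLt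
    have hsepL : ((K i : ℝ) - 1) * d i ≤ L := by
      rw [← hQcard]
      exact le_trans hsep' (hIcoL _ _ (le_of_lt hmax))
    nlinarith [hsepL, hdiL]
  have c2 : ∑ k ∈ S.image K, 2 * L / (k : ℝ) = ∑ i ∈ S, 2 * L / (K i : ℝ) :=
    Finset.sum_image hKinj
  calc walkLen ⇑e = ∑ i ∈ S, d i := hwalkE
    _ ≤ ∑ i ∈ S, 2 * L / (K i : ℝ) := by
        refine Finset.sum_le_sum fun i hi => ?_
        have hKpos : (0:ℝ) < (K i : ℝ) := by exact_mod_cast hK1 i hi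
        rw [le_div_iff₀ hKpos]
        linarith [hKd i hi]
    _ = ∑ k ∈ S.image K, 2 * L / (k : ℝ) := c2.symm
    _ ≤ ∑ k ∈ Finset.Icc 1 n, 2 * L / (k : ℝ) := by
        apply Finset.sum_le_sum_of_subset_of_nonneg
        · intro k hk
          obtain ⟨i, hi, rfl⟩ := Finset.mem_image.mp hk
          exact Finset.mem_Icc.mpr ⟨hK1 i hi, hKn i⟩
        · intro k _ _
          positivity
    _ = 2 * L * ∑ k ∈ Finset.Icc 1 n, (1:ℝ)/(k:ℝ) := by
        rw [Finset.mul_sum]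
        refine Finset.sum_congr rfl fun k _ => ?_
        ring
    _ ≤ 2 * L * (1 + Real.log n) := by
        nlinarith [harm_le n hn1, hL0]
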